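/- Let A be a set and f : A → A a self-map. There exists a lattice structure (A, ⊔, ⊓) on A such that f is a lattice anti-endomorphism of (A, ⊔, ⊓) if and only if f has a cycle of length 2, or f has no proper cycles and has at most one fixed point. -/

import Mathlib

set_option linter.unusedSectionVars false
set_option maxHeartbeats 1000000



/-- `f` has a cycle of length `n`: `n` distinct elements `x₀,…,x_{n-1}` with
`f(xᵢ) = x_{i+1}` (indices mod `n`). -/
def HasCycle {A : Type*} (f : A → A) (n : ℕ) : Prop :=
  ∃ x : Fin n → A, Function.Injective x ∧
    ∀ i : Fin n, f (x i) = x ⟨((i : ℕ) + 1) % n, Nat.mod_lt _ i.pos⟩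

/-- `f` is a lattice anti-endomorphism. -/
def IsLatAntiEndo {A : Type*} [Lattice A] (f : A → A) : Prop :=
  ∀ x y : A, f (x ⊔ y) = f x ⊓ f y ∧ f (x ⊓ y) = f x ⊔ f y

namespace LatAE

open Function

variable {A : Type*} [LinearOrder A] {f : A → A}

/-- `x` and `y` eventually merge under iteration of `f`. -/
def Mg (f : A → A) (x y : A) : Prop := ∃ n, f^[n] x = f^[n] y

lemma mg_refl (f : A → A) (x : A) : Mg f x x := ⟨0, rfl⟩

lemma mg_symm {x y : A} (h : Mg f x y) : Mg f y x := h.imp fun _ e => e.symm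

lemma iter_stable {x y : A} {n m : ℕ} (h : f^[n] x = f^[n] y) (hm : n ≤ m) :
    f^[m] x = f^[m] y := by
  obtain ⟨k, rfl⟩ := Nat.exists_eq_add_of_le hm
  rw [Nat.add_comm, iterate_add_apply, iterate_add_apply, h]

lemma mg_trans {x y z : A} (h1 : Mg f x y) (h2 : Mg f y z) : Mg f x z := by
  obtain ⟨n, hn⟩ := h1; obtain ⟨m, hm⟩ := h2
  exact ⟨max n m, (iter_stable hn (le_max_left _ _)).trans
    (iter_stable hm (le_max_right _ _))⟩

lemma mg_step {x y : A} (h : Mg f x y) : Mg f (f x) (f y) := by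
  obtain ⟨n, hn⟩ := h
  refine ⟨n, ?_⟩
  rw [← iterate_succ_apply, ← iterate_succ_apply]
  exact iter_stable hn (Nat.le_succ n)

lemma mg_pull {x y : A} (h : Mg f (f x) (f y)) : Mg f x y := by
  obtain ⟨n, hn⟩ := h
  exact ⟨n + 1, by rwa [iterate_succ_apply, iterate_succ_apply]⟩

lemma mg_iter_pull {x y : A} {k : ℕ} (h : Mg f (f^[k] x) (f^[k] y)) : Mg f x y := by
  obtain ⟨n, hn⟩ := h
  exact ⟨n + k, by rwa [iterate_add_apply, iterate_add_apply]⟩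

open Classical in
/-- first time at which `x` and `y` merge. -/
noncomputable def mT (f : A → A) (x y : A) : ℕ :=
  if h : Mg f x y then Nat.find h else 0

lemma mT_spec {x y : A} (h : Mg f x y) : f^[mT f x y] x = f^[mT f x y] y := by
  classical
  rw [mT, dif_pos h]
  exact Nat.find_spec h

lemma mT_le {x y : A} (h : Mg f x y) {k : ℕ} (hk : f^[k] x = f^[k] y) :
    mT f x y ≤ k := by
  classical
  rw [mT, dif_pos h]
  exact Nat.find_le hk

lemma mT_min {x y : A} (h : Mg f x y) {k : ℕ} (hk : k < mT f x y) :
    f^[k] x ≠ f^[k] y := by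
  classical
  rw [mT, dif_pos h] at hk
  exact Nat.find_min h hk

lemma mT_symm (f : A → A) (x y : A) : mT f x y = mT f y x := by
  by_cases h : Mg f x y
  · exact le_antisymm (mT_le h (mT_spec (mg_symm h)).symm)
      (mT_le (mg_symm h) (mT_spec h).symm)
  · have h' : ¬ Mg f y x := fun hc => h (mg_symm hc)
    rw [mT, mT, dif_neg h, dif_neg h']

lemma mT_pos {x y : A} (h : Mg f x y) (hne : x ≠ y) : 0 < mT f x y := by
  rcases Nat.eq_zero_or_pos (mT f x y) with h0 | h1
  · exact absurd (by simpa [h0] using mT_spec h) hne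
  · exact h1

/-- the "last difference with parity" order within a merge class. -/
def Wlt (f : A → A) (x y : A) : Prop :=
  Mg f x y ∧ x ≠ y ∧
    (if Even (mT f x y - 1) then f^[mT f x y - 1] x < f^[mT f x y - 1] y
     else f^[mT f x y - 1] y < f^[mT f x y - 1] x)

lemma wlt_asymm {x y : A} (h1 : Wlt f x y) (h2 : Wlt f y x) : False := by
  obtain ⟨hm1, hne1, hc1⟩ := h1
  obtain ⟨hm2, hne2, hc2⟩ := h2
  rw [mT_symm f y x] at hc2
  by_cases he : Even (mT f x y - 1)
  · rw [if_pos he] at hc1 hc2; exact lt_asymm hc1 hc2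
  · rw [if_neg he] at hc1 hc2; exact lt_asymm hc1 hc2

lemma wlt_irrefl (x : A) : ¬ Wlt f x x := fun h => h.2.1 rfl

lemma wlt_trichotomy {x y : A} (h : Mg f x y) (hne : x ≠ y) :
    Wlt f x y ∨ Wlt f y x := by
  have hpos := mT_pos h hne
  have hlt : mT f x y - 1 < mT f x y := Nat.sub_lt hpos one_pos
  have hd := mT_min h hlt
  rcases lt_or_gt_of_ne hd with hv | hv
  · by_cases he : Even (mT f x y - 1)
    · exact Or.inl ⟨h, hne, by rw [if_pos he]; exact hv⟩
    · exact Or.inr ⟨mg_symm h, hne.symm, by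
        rw [mT_symm f y x, if_neg he]; exact hv⟩
  · by_cases he : Even (mT f x y - 1)
    · exact Or.inr ⟨mg_symm h, hne.symm, by
        rw [mT_symm f y x, if_pos he]; exact hv⟩
    · exact Or.inl ⟨h, hne, by rw [if_neg he]; exact hv⟩


lemma wlt_trans {x y z : A} (h1 : Wlt f x y) (h2 : Wlt f y z) : Wlt f x z := by
  obtain ⟨hm1, hne1, hc1⟩ := h1
  obtain ⟨hm2, hne2, hc2⟩ := h2
  have hmxz : Mg f x z := mg_trans hm1 hm2
  rcases lt_trichotomy (mT f x y) (mT f y z) with hlt | heq | hgt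
  · -- t1 < t2 : comparison dominated by (y,z)
    have hagree : f^[mT f y z] x = f^[mT f y z] z :=
      (iter_stable (mT_spec hm1) hlt.le).trans (mT_spec hm2)
    have hle : mT f x z ≤ mT f y z := mT_le hmxz hagree
    have hge : mT f y z ≤ mT f x z := by
      by_contra hk
      push_neg at hk
      have hspec := mT_spec hmxz
      rcases le_or_gt (mT f x y) (mT f x z) with hca | hca
      · have h1' : f^[mT f x z] x = f^[mT f x z] y := iter_stable (mT_spec hm1) hca
        have : f^[mT f x z] y = f^[mT f x z] z := h1'.symm.trans hspec
        exact mT_min hm2 hk this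
      · have h1' : f^[mT f x y] x = f^[mT f x y] z := iter_stable hspec hca.le
        have : f^[mT f x y] y = f^[mT f x y] z := (mT_spec hm1).symm.trans h1'
        exact mT_min hm2 hlt this
    have hT : mT f x z = mT f y z := le_antisymm hle hge
    have hmm : mT f x y ≤ mT f y z - 1 := Nat.le_sub_one_of_lt hlt
    have hxy : f^[mT f y z - 1] x = f^[mT f y z - 1] y := iter_stable (mT_spec hm1) hmm
    have hnexz : x ≠ z := by
      intro he; subst he
      have := mT_min hm2 (Nat.sub_lt (mT_pos hm2 hne2) one_pos)
      rw [← hxy] at this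
      exact this (by rw [hxy])
    refine ⟨hmxz, hnexz, ?_⟩
    rw [hT]
    by_cases he : Even (mT f y z - 1)
    · rw [if_pos he] at hc2 ⊢; rwa [hxy]
    · rw [if_neg he] at hc2 ⊢; rwa [hxy]
  · -- equal times
    have hd1 := mT_min hm1 (Nat.sub_lt (mT_pos hm1 hne1) one_pos)
    rw [heq] at hc1 hd1
    -- now hc1, hc2 both at m := mT f y z - 1
    have key : ∀ (hv : f^[mT f y z - 1] x ≠ f^[mT f y z - 1] z), mT f x z = mT f y z := by
      intro hv
      have hagree : f^[mT f y z] x = f^[mT f y z] z :=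
        (iter_stable (mT_spec hm1) heq.le).trans (mT_spec hm2)
      refine le_antisymm (mT_le hmxz hagree) ?_
      by_contra hk
      push_neg at hk
      have hk' : mT f x z ≤ mT f y z - 1 := Nat.le_sub_one_of_lt hk
      exact hv (iter_stable (mT_spec hmxz) hk')
    by_cases he : Even (mT f y z - 1)
    · rw [if_pos he] at hc1 hc2
      have hv : f^[mT f y z - 1] x < f^[mT f y z - 1] z := hc1.trans hc2
      have hT := key hv.ne
      have hnexz : x ≠ z := fun hxe => absurd (congrArg (f^[mT f y z - 1]) hxe) hv.ne
      exact ⟨hmxz, hnexz, by rw [hT, if_pos he]; exact hv⟩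
    · rw [if_neg he] at hc1 hc2
      have hv : f^[mT f y z - 1] z < f^[mT f y z - 1] x := hc2.trans hc1
      have hT := key (Ne.symm hv.ne)
      have hnexz : x ≠ z := fun hxe => absurd (congrArg (f^[mT f y z - 1]) hxe).symm hv.ne
      exact ⟨hmxz, hnexz, by rw [hT, if_neg he]; exact hv⟩
  · -- t2 < t1 : comparison dominated by (x,y)
    have hagree : f^[mT f x y] x = f^[mT f x y] z :=
      (mT_spec hm1).trans (iter_stable (mT_spec hm2) hgt.le)
    have hle : mT f x z ≤ mT f x y := mT_le hmxz hagree
    have hge : mT f x y ≤ mT f x z := by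
      by_contra hk
      push_neg at hk
      have hspec := mT_spec hmxz
      rcases le_or_gt (mT f y z) (mT f x z) with hca | hca
      · have h2' : f^[mT f x z] y = f^[mT f x z] z := iter_stable (mT_spec hm2) hca
        have : f^[mT f x z] x = f^[mT f x z] y := hspec.trans h2'.symm
        exact mT_min hm1 hk this
      · have h2' : f^[mT f y z] x = f^[mT f y z] z := iter_stable hspec hca.le
        have : f^[mT f y z] x = f^[mT f y z] y := h2'.trans (mT_spec hm2).symm
        exact mT_min hm1 hgt this
    have hT : mT f x z = mT f x y := le_antisymm hle hge
    have hmm : mT f y z ≤ mT f x y - 1 := Nat.le_sub_one_of_lt hgt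
    have hyz : f^[mT f x y - 1] y = f^[mT f x y - 1] z := iter_stable (mT_spec hm2) hmm
    have hnexz : x ≠ z := by
      intro he; subst he
      have := mT_min hm1 (Nat.sub_lt (mT_pos hm1 hne1) one_pos)
      exact this (by rw [hyz])
    refine ⟨hmxz, hnexz, ?_⟩
    rw [hT]
    by_cases he : Even (mT f x y - 1)
    · rw [if_pos he] at hc1 ⊢; rwa [← hyz]
    · rw [if_neg he] at hc1 ⊢; rwa [← hyz]

lemma wlt_flip {x y : A} (h : Wlt f x y) : f x = f y ∨ Wlt f (f y) (f x) := by
  by_cases hfe : f x = f y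
  · exact Or.inl hfe
  right
  obtain ⟨hm, hne, hc⟩ := h
  have hmg' : Mg f (f x) (f y) := mg_step hm
  have ht2 : 2 ≤ mT f x y := by
    by_contra hlt
    push_neg at hlt
    have h1 : 0 < mT f x y := mT_pos hm hne
    have he1 : mT f x y = 1 := by omega
    have hsp := mT_spec hm
    rw [he1] at hsp
    exact hfe (by simpa using hsp)
  have hTim : mT f (f x) (f y) = mT f x y - 1 := by
    refine le_antisymm (mT_le hmg' ?_) ?_
    · rw [← iterate_succ_apply, ← iterate_succ_apply,
        Nat.succ_eq_add_one, Nat.sub_add_cancel (le_trans one_le_two ht2)]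
      exact mT_spec hm
    · by_contra hk
      push_neg at hk
      have hsp := mT_spec hmg'
      rw [← iterate_succ_apply, ← iterate_succ_apply] at hsp
      have hlt : mT f (f x) (f y) + 1 < mT f x y := by omega
      exact mT_min hm hlt hsp
  -- m' := mT f x y - 2 ; m := mT f x y - 1 = m' + 1
  have hm'1 : mT f (f x) (f y) - 1 + 1 = mT f x y - 1 := by omega
  have hval : ∀ w : A, f^[mT f (f x) (f y) - 1] (f w) = f^[mT f x y - 1] w := by
    intro w
    rw [← iterate_succ_apply, Nat.succ_eq_add_one, hm'1]
  have hpar : Even (mT f (f x) (f y) - 1) ↔ ¬ Even (mT f x y - 1) := by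
    rw [← hm'1]
    simp [Nat.even_add_one]
  refine ⟨mg_symm hmg', Ne.symm hfe, ?_⟩
  rw [mT_symm f (f y) (f x)]
  by_cases he : Even (mT f x y - 1)
  · rw [if_pos he] at hc
    rw [if_neg (by rw [hpar]; exact not_not_intro he), hval, hval]
    exact hc
  · rw [if_neg he] at hc
    rw [if_pos (hpar.mpr he), hval, hval]
    exact hc


section TwoCycle

variable {A : Type*} [LinearOrder A] {f : A → A} {a b : A}

open Classical in
/-- zone: 0 = merges with `a`, 2 = merges with `b`, 1 = neither. -/
noncomputable def zone (f : A → A) (a b x : A) : ℕ :=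
  if Mg f x a then 0 else if Mg f x b then 2 else 1

/-- order for the 2-cycle case -/
def le2 (f : A → A) (a b x y : A) : Prop :=
  x = y ∨ zone f a b x < zone f a b y ∨ (zone f a b x = zone f a b y ∧ Wlt f x y)

lemma le2_refl (x : A) : le2 f a b x x := Or.inl rfl

lemma le2_trans {x y z : A} (h1 : le2 f a b x y) (h2 : le2 f a b y z) :
    le2 f a b x z := by
  rcases h1 with rfl | h1
  · exact h2
  rcases h2 with rfl | h2
  · exact Or.inr h1
  rcases h1 with h1 | ⟨h1e, h1w⟩
  · rcases h2 with h2 | ⟨h2e, h2w⟩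
    · exact Or.inr (Or.inl (h1.trans h2))
    · exact Or.inr (Or.inl (h2e ▸ h1))
  · rcases h2 with h2 | ⟨h2e, h2w⟩
    · exact Or.inr (Or.inl (h1e ▸ h2))
    · exact Or.inr (Or.inr ⟨h1e.trans h2e, wlt_trans h1w h2w⟩)

lemma le2_antisymm {x y : A} (h1 : le2 f a b x y) (h2 : le2 f a b y x) : x = y := by
  rcases h1 with rfl | h1
  · rfl
  rcases h2 with rfl | h2
  · rfl
  rcases h1 with h1 | ⟨h1e, h1w⟩ <;> rcases h2 with h2 | ⟨h2e, h2w⟩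
  · omega
  · omega
  · omega
  · exact absurd h2w (fun hc => wlt_asymm h1w hc)


variable (hab : a ≠ b) (hfa : f a = b) (hfb : f b = a)
  (hbmin : ∀ x : A, x ≠ b → b < x) (hamax : ∀ x : A, x ≠ a → x < a)

section
include hfa hfb

lemma iter_ab : ∀ n : ℕ, f^[n] a = (if Even n then a else b) ∧
    f^[n] b = (if Even n then b else a) := by
  intro n
  induction n with
  | zero => simp
  | succ k ih =>
    constructor
    · rw [Function.iterate_succ_apply', ih.1]
      by_cases he : Even k
      · rw [if_pos he, hfa, if_neg (by simp [Nat.even_add_one, he])]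
      · rw [if_neg he, hfb, if_pos (by simp [Nat.even_add_one, he])]
    · rw [Function.iterate_succ_apply', ih.2]
      by_cases he : Even k
      · rw [if_pos he, hfb, if_neg (by simp [Nat.even_add_one, he])]
      · rw [if_neg he, hfa, if_pos (by simp [Nat.even_add_one, he])]

include hab

lemma mg_ab_not : ¬ Mg f a b := by
  rintro ⟨n, h⟩
  rw [(iter_ab hfa hfb n).1, (iter_ab hfa hfb n).2] at h
  by_cases he : Even n
  · rw [if_pos he, if_pos he] at h; exact hab h
  · rw [if_neg he, if_neg he] at h; exact hab h.symm

lemma mg_fa_iff (x : A) : Mg f (f x) b ↔ Mg f x a := by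
  constructor
  · rintro ⟨n, h⟩
    refine ⟨n + 1, ?_⟩
    rw [Function.iterate_succ_apply, Function.iterate_succ_apply, hfa]
    exact h
  · rintro ⟨n, h⟩
    refine ⟨n, ?_⟩
    have key : ∀ w : A, f^[n] (f w) = f (f^[n] w) := fun w =>
      (Function.iterate_succ_apply f n w).symm.trans (Function.iterate_succ_apply' f n w)
    rw [key x, h, ← key a, hfa]

lemma mg_fb_iff (x : A) : Mg f (f x) a ↔ Mg f x b := by
  constructor
  · rintro ⟨n, h⟩
    refine ⟨n + 1, ?_⟩
    rw [Function.iterate_succ_apply, Function.iterate_succ_apply, hfb]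
    exact h
  · rintro ⟨n, h⟩
    refine ⟨n, ?_⟩
    have key : ∀ w : A, f^[n] (f w) = f (f^[n] w) := fun w =>
      (Function.iterate_succ_apply f n w).symm.trans (Function.iterate_succ_apply' f n w)
    rw [key x, h, ← key b, hfb]

lemma zone_a : zone f a b a = 0 := by
  simp only [zone]
  rw [if_pos (mg_refl f a)]

lemma zone_b : zone f a b b = 2 := by
  simp only [zone]
  rw [if_neg (fun h => mg_ab_not hab hfa hfb (mg_symm h)), if_pos (mg_refl f b)]

lemma zone_le_two (x : A) : zone f a b x ≤ 2 := by
  simp only [zone]; split_ifs <;> omega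

lemma zone_eq_zero {x : A} (h : zone f a b x = 0) : Mg f x a := by
  by_contra hm
  simp only [zone] at h
  rw [if_neg hm] at h
  split_ifs at h <;> omega

lemma zone_eq_two {x : A} (h : zone f a b x = 2) : Mg f x b ∧ ¬ Mg f x a := by
  by_cases hm : Mg f x a
  · simp only [zone] at h; rw [if_pos hm] at h; omega
  by_cases hm2 : Mg f x b
  · exact ⟨hm2, hm⟩
  · simp only [zone] at h; rw [if_neg hm, if_neg hm2] at h; omega

lemma zone_eq_one {x : A} (h : zone f a b x = 1) : ¬ Mg f x a ∧ ¬ Mg f x b := by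
  by_cases hm : Mg f x a
  · simp only [zone] at h; rw [if_pos hm] at h; omega
  by_cases hm2 : Mg f x b
  · simp only [zone] at h; rw [if_neg hm, if_pos hm2] at h; omega
  · exact ⟨hm, hm2⟩

lemma zone_f (x : A) : zone f a b (f x) = 2 - zone f a b x := by
  by_cases hm : Mg f x a
  · have h1 : Mg f (f x) b := (mg_fa_iff hab hfa hfb x).mpr hm
    have h2 : ¬ Mg f (f x) a := by
      intro hc
      exact mg_ab_not hab hfa hfb (mg_trans (mg_symm hc) h1)
    simp only [zone]
    rw [if_pos hm, if_neg h2, if_pos h1]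
  by_cases hm2 : Mg f x b
  · have h1 : Mg f (f x) a := (mg_fb_iff hab hfa hfb x).mpr hm2
    simp only [zone]
    rw [if_neg hm, if_pos hm2, if_pos h1]
  · have h1 : ¬ Mg f (f x) a := fun hc => hm2 ((mg_fb_iff hab hfa hfb x).mp hc)
    have h2 : ¬ Mg f (f x) b := fun hc => hm ((mg_fa_iff hab hfa hfb x).mp hc)
    simp only [zone]
    rw [if_neg hm, if_neg hm2, if_neg h1, if_neg h2]

include hbmin hamax

lemma wlt_b_min {x : A} (h : Mg f x b) (hne : x ≠ b) : Wlt f b x := by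
  have hmg : Mg f b x := mg_symm h
  have hne' : b ≠ x := hne.symm
  have hd := mT_min hmg (Nat.sub_lt (mT_pos hmg hne') one_pos)
  refine ⟨hmg, hne', ?_⟩
  by_cases he : Even (mT f b x - 1)
  · rw [if_pos he]
    have hb : f^[mT f b x - 1] b = b := by
      rw [(iter_ab hfa hfb _).2, if_pos he]
    rw [hb]
    rw [hb] at hd
    exact hbmin _ (Ne.symm hd)
  · rw [if_neg he]
    have hb : f^[mT f b x - 1] b = a := by
      rw [(iter_ab hfa hfb _).2, if_neg he]
    rw [hb]
    rw [hb] at hd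
    exact hamax _ (Ne.symm hd)

lemma wlt_a_max {x : A} (h : Mg f x a) (hne : x ≠ a) : Wlt f x a := by
  have hd := mT_min h (Nat.sub_lt (mT_pos h hne) one_pos)
  refine ⟨h, hne, ?_⟩
  by_cases he : Even (mT f x a - 1)
  · rw [if_pos he]
    have ha : f^[mT f x a - 1] a = a := by
      rw [(iter_ab hfa hfb _).1, if_pos he]
    rw [ha]
    rw [ha] at hd
    exact hamax _ hd
  · rw [if_neg he]
    have ha : f^[mT f x a - 1] a = b := by
      rw [(iter_ab hfa hfb _).1, if_neg he]
    rw [ha]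
    rw [ha] at hd
    exact hbmin _ hd

omit hbmin hamax

lemma le2_antitone {x y : A} (h : le2 f a b x y) : le2 f a b (f y) (f x) := by
  rcases h with rfl | h | ⟨he, hw⟩
  · exact le2_refl _
  · refine Or.inr (Or.inl ?_)
    rw [zone_f hab hfa hfb, zone_f hab hfa hfb]
    have h2 := zone_le_two hab hfa hfb x
    have h3 := zone_le_two hab hfa hfb y
    omega
  · rcases wlt_flip hw with hfe | hfw
    · exact Or.inl hfe.symm
    · refine Or.inr (Or.inr ⟨?_, hfw⟩)
      rw [zone_f hab hfa hfb, zone_f hab hfa hfb, he]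

lemma le2_incomp {x y : A} (h1 : ¬ le2 f a b x y) (h2 : ¬ le2 f a b y x) :
    zone f a b x = 1 ∧ zone f a b y = 1 ∧ ¬ Mg f x y := by
  have hne : x ≠ y := fun hc => h1 (Or.inl hc)
  have hze : zone f a b x = zone f a b y := by
    rcases lt_trichotomy (zone f a b x) (zone f a b y) with h | h | h
    · exact absurd (Or.inr (Or.inl h)) h1
    · exact h
    · exact absurd (Or.inr (Or.inl h)) h2
  have hmg : ¬ Mg f x y := by
    intro hm
    rcases wlt_trichotomy hm hne with hw | hw
    · exact h1 (Or.inr (Or.inr ⟨hze, hw⟩))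
    · exact h2 (Or.inr (Or.inr ⟨hze.symm, hw⟩))
  have hz1 : zone f a b x = 1 := by
    have hle := zone_le_two hab hfa hfb x
    rcases Nat.lt_or_ge (zone f a b x) 1 with h | h
    · have h0 : zone f a b x = 0 := by omega
      have h0' : zone f a b y = 0 := by omega
      exact absurd (mg_trans (zone_eq_zero hab hfa hfb h0) (mg_symm (zone_eq_zero hab hfa hfb h0')))
        hmg
    · rcases Nat.lt_or_ge (zone f a b x) 2 with h' | h'
      · omega
      · have h2' : zone f a b x = 2 := by omega
        have h2'' : zone f a b y = 2 := by omega
        exact absurd (mg_trans (zone_eq_two hab hfa hfb h2').1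
          (mg_symm (zone_eq_two hab hfa hfb h2'').1)) hmg
  exact ⟨hz1, hze ▸ hz1, hmg⟩

omit hab hfa hfb in
open Classical in
/-- join for the 2-cycle case -/
noncomputable def sup2 (x y : A) : A :=
  if le2 f a b x y then y else if le2 f a b y x then x else b

omit hab hfa hfb in
open Classical in
/-- meet for the 2-cycle case -/
noncomputable def inf2 (x y : A) : A :=
  if le2 f a b x y then x else if le2 f a b y x then y else a

open Classical in
/-- The lattice for the 2-cycle case. -/
noncomputable def twoCycleLattice : Lattice A where
  le := le2 f a b
  le_refl := le2_refl
  le_trans := fun _ _ _ => le2_trans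
  le_antisymm := fun _ _ => le2_antisymm
  lt x y := le2 f a b x y ∧ ¬ le2 f a b y x
  lt_iff_le_not_ge := fun _ _ => Iff.rfl
  sup := @sup2 A _ f a b
  inf := @inf2 A _ f a b
  le_sup_left x y := by
    simp only [sup2, inf2]
    by_cases h1 : le2 f a b x y
    · rw [if_pos h1]; exact h1
    by_cases h2 : le2 f a b y x
    · rw [if_neg h1, if_pos h2]; exact le2_refl x
    · rw [if_neg h1, if_neg h2]
      obtain ⟨hz, -, -⟩ := le2_incomp hab hfa hfb h1 h2
      exact Or.inr (Or.inl (by rw [hz, zone_b hab hfa hfb]; omega))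
  le_sup_right x y := by
    simp only [sup2, inf2]
    by_cases h1 : le2 f a b x y
    · rw [if_pos h1]; exact le2_refl y
    by_cases h2 : le2 f a b y x
    · rw [if_neg h1, if_pos h2]; exact h2
    · rw [if_neg h1, if_neg h2]
      obtain ⟨-, hz, -⟩ := le2_incomp hab hfa hfb h1 h2
      exact Or.inr (Or.inl (by rw [hz, zone_b hab hfa hfb]; omega))
  sup_le x y u hxu' hyu' := by
    have hxu : le2 f a b x u := hxu'
    have hyu : le2 f a b y u := hyu'
    simp only [sup2, inf2]
    by_cases h1 : le2 f a b x y
    · rw [if_pos h1]; exact hyu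
    by_cases h2 : le2 f a b y x
    · rw [if_neg h1, if_pos h2]; exact hxu
    rw [if_neg h1, if_neg h2]
    obtain ⟨hzx, hzy, hmg⟩ := le2_incomp hab hfa hfb h1 h2
    -- establish zone u = 2
    have hzu : zone f a b u = 2 := by
      rcases hxu with rfl | hx | ⟨hxe, hxw⟩
      · exact absurd hyu h2
      · have := zone_le_two hab hfa hfb u; omega
      · rcases hyu with rfl | hy | ⟨hye, hyw⟩
        · exact absurd hxu' h1
        · have := zone_le_two hab hfa hfb u; omega
        · exact absurd (mg_trans hxw.1 (mg_symm hyw.1)) hmg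
    by_cases hub : u = b
    · rw [hub]; exact le2_refl b
    · refine Or.inr (Or.inr ⟨by rw [zone_b hab hfa hfb, hzu], ?_⟩)
      exact wlt_b_min hab hfa hfb hbmin hamax (zone_eq_two hab hfa hfb hzu).1 hub
  inf_le_left x y := by
    simp only [sup2, inf2]
    by_cases h1 : le2 f a b x y
    · rw [if_pos h1]; exact le2_refl x
    by_cases h2 : le2 f a b y x
    · rw [if_neg h1, if_pos h2]; exact h2
    · rw [if_neg h1, if_neg h2]
      obtain ⟨hz, -, -⟩ := le2_incomp hab hfa hfb h1 h2
      exact Or.inr (Or.inl (by rw [hz, zone_a hab hfa hfb]; omega))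
  inf_le_right x y := by
    simp only [sup2, inf2]
    by_cases h1 : le2 f a b x y
    · rw [if_pos h1]; exact h1
    by_cases h2 : le2 f a b y x
    · rw [if_neg h1, if_pos h2]; exact le2_refl y
    · rw [if_neg h1, if_neg h2]
      obtain ⟨-, hz, -⟩ := le2_incomp hab hfa hfb h1 h2
      exact Or.inr (Or.inl (by rw [hz, zone_a hab hfa hfb]; omega))
  le_inf u x y hux' huy' := by
    have hux : le2 f a b u x := hux'
    have huy : le2 f a b u y := huy'
    simp only [sup2, inf2]
    by_cases h1 : le2 f a b x y
    · rw [if_pos h1]; exact hux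
    by_cases h2 : le2 f a b y x
    · rw [if_neg h1, if_pos h2]; exact huy
    rw [if_neg h1, if_neg h2]
    obtain ⟨hzx, hzy, hmg⟩ := le2_incomp hab hfa hfb h1 h2
    have hzu : zone f a b u = 0 := by
      rcases hux with rfl | hx | ⟨hxe, hxw⟩
      · exact absurd huy h1
      · rcases huy with rfl | hy | ⟨hye, hyw⟩
        · exact absurd hux' h2
        · omega
        · omega
      · rcases huy with rfl | hy | ⟨hye, hyw⟩
        · exact absurd hux' h2
        · omega
        · exact absurd (mg_trans (mg_symm hxw.1) hyw.1) hmg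
    by_cases hua : u = a
    · rw [hua]; exact le2_refl a
    · refine Or.inr (Or.inr ⟨by rw [zone_a hab hfa hfb, hzu], ?_⟩)
      exact wlt_a_max hab hfa hfb hbmin hamax (zone_eq_zero hab hfa hfb hzu) hua

lemma anti_main (x y : A) :
    f (@sup2 A _ f a b x y) = @inf2 A _ f a b (f x) (f y) ∧
    f (@inf2 A _ f a b x y) = @sup2 A _ f a b (f x) (f y) := by
  by_cases h1 : le2 f a b x y
  · by_cases h2 : le2 f a b y x
    · have hxy : x = y := le2_antisymm h1 h2
      subst hxy
      constructor
      · simp only [sup2, inf2]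
        rw [if_pos (le2_refl x), if_pos (le2_refl (f x))]
      · simp only [sup2, inf2]
        rw [if_pos (le2_refl x), if_pos (le2_refl (f x))]
    · have hf : le2 f a b (f y) (f x) := le2_antitone hab hfa hfb h1
      constructor
      · simp only [sup2, inf2]
        rw [if_pos h1]
        by_cases h3 : le2 f a b (f x) (f y)
        · rw [if_pos h3]
          exact (le2_antisymm h3 hf).symm
        · rw [if_neg h3, if_pos hf]
      · simp only [sup2, inf2]
        rw [if_pos h1]
        by_cases h3 : le2 f a b (f x) (f y)
        · rw [if_pos h3]
          exact le2_antisymm h3 hf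
        · rw [if_neg h3, if_pos hf]
  · by_cases h2 : le2 f a b y x
    · have hf : le2 f a b (f x) (f y) := le2_antitone hab hfa hfb h2
      constructor
      · simp only [sup2, inf2]
        rw [if_neg h1, if_pos h2, if_pos hf]
      · simp only [sup2, inf2]
        rw [if_neg h1, if_pos h2]
        by_cases h3 : le2 f a b (f x) (f y)
        · rw [if_pos h3]
        · exact absurd hf h3
    · obtain ⟨hzx, hzy, hmg⟩ := le2_incomp hab hfa hfb h1 h2
      have hn1 : ¬ le2 f a b (f x) (f y) := by
        rintro (hfe | hlt | ⟨-, hw⟩)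
        · exact hmg ⟨1, by simpa using hfe⟩
        · rw [zone_f hab hfa hfb, zone_f hab hfa hfb, hzx, hzy] at hlt
          omega
        · exact hmg (mg_pull hw.1)
      have hn2 : ¬ le2 f a b (f y) (f x) := by
        rintro (hfe | hlt | ⟨-, hw⟩)
        · exact hmg ⟨1, by simpa using hfe.symm⟩
        · rw [zone_f hab hfa hfb, zone_f hab hfa hfb, hzx, hzy] at hlt
          omega
        · exact hmg (mg_pull (mg_symm hw.1))
      constructor
      · simp only [sup2, inf2]
        rw [if_neg h1, if_neg h2, if_neg hn1, if_neg hn2, hfb]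
      · simp only [sup2, inf2]
        rw [if_neg h1, if_neg h2, if_neg hn1, if_neg hn2, hfa]

end

end TwoCycle


section NoCycle

variable {A : Type*} [LinearOrder A] [hwf : WellFoundedLT A] {f : A → A}

/-- eventually fixed -/
def EF (f : A → A) (x : A) : Prop := ∃ n, f (f^[n] x) = f^[n] x

/-- same grand orbit -/
def Orb (f : A → A) (x y : A) : Prop := ∃ p q, f^[p] x = f^[q] y

lemma orb_refl (f : A → A) (x : A) : Orb f x x := ⟨0, 0, rfl⟩

lemma orb_symm {x y : A} (h : Orb f x y) : Orb f y x := by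
  obtain ⟨p, q, h⟩ := h; exact ⟨q, p, h.symm⟩

lemma orb_trans {x y z : A} (h1 : Orb f x y) (h2 : Orb f y z) : Orb f x z := by
  obtain ⟨p, q, h1⟩ := h1
  obtain ⟨p', q', h2⟩ := h2
  refine ⟨p' + p, q + q', ?_⟩
  rw [Function.iterate_add_apply, h1, ← Function.iterate_add_apply,
    Nat.add_comm p' q, Function.iterate_add_apply, h2, ← Function.iterate_add_apply]

lemma orb_step (f : A → A) (x : A) : Orb f x (f x) :=
  ⟨1, 0, by simp⟩

/-- representative of a grand orbit (minimum w.r.t. the base well-order). -/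
noncomputable def rep (f : A → A) [hwf : WellFoundedLT A] (x : A) : A :=
  WellFounded.min hwf.wf {y | Orb f x y} ⟨x, orb_refl f x⟩

lemma rep_mem (x : A) : Orb f x (rep f x) :=
  WellFounded.min_mem hwf.wf {y | Orb f x y} ⟨x, orb_refl f x⟩

lemma rep_eq {x y : A} (h : Orb f x y) : rep f x = rep f y := by
  have hmx : Orb f y (rep f x) := orb_trans (orb_symm h) (rep_mem x)
  have hmy : Orb f x (rep f y) := orb_trans h (rep_mem y)
  rcases lt_trichotomy (rep f x) (rep f y) with hlt | he | hlt
  · exact absurd hlt (WellFounded.not_lt_min hwf.wf {z | Orb f y z} hmx)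
  · exact he
  · exact absurd hlt (WellFounded.not_lt_min hwf.wf {z | Orb f x z} hmy)

lemma rep_f (x : A) : rep f (f x) = rep f x := (rep_eq (orb_step f x)).symm

lemma ef_stable {x : A} {n : ℕ} (h : f (f^[n] x) = f^[n] x) {m : ℕ} (hm2 : n ≤ m) :
    f^[m] x = f^[n] x := by
  obtain ⟨k, rfl⟩ := Nat.exists_eq_add_of_le hm2
  induction k with
  | zero => rfl
  | succ j ih =>
    have e := ih (by omega)
    rw [show n + (j+1) = (n + j) + 1 by omega, Function.iterate_succ_apply', e, h]

lemma ef_f_iff (x : A) : EF f (f x) ↔ EF f x := by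
  constructor
  · rintro ⟨n, h⟩
    refine ⟨n + 1, ?_⟩
    rwa [Function.iterate_succ_apply]
  · rintro ⟨n, h⟩
    refine ⟨n, ?_⟩
    rw [← Function.iterate_succ_apply, Function.iterate_succ_apply', h]
    exact h

lemma orb_nonEF {x y : A} (hx : ¬ EF f x) (h : Orb f x y) : ¬ EF f y := by
  rintro ⟨n, hn⟩
  obtain ⟨p, q, hpq⟩ := h
  apply hx
  refine ⟨n + p, ?_⟩
  have h1 : f^[n + p] x = f^[n] (f^[q] y) := by
    rw [Function.iterate_add_apply f n p x, hpq]
  have h2 : f^[n] (f^[q] y) = f^[n + q] y := (Function.iterate_add_apply f n q y).symm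
  have h3 : f^[n + q] y = f^[n] y := ef_stable hn (by omega)
  rw [h1, h2, h3]
  exact hn

variable (hnc : ∀ w : A, ∀ p : ℕ, 1 ≤ p → f^[p] w = w → f w = w)
  (huf : ∀ u v : A, f u = u → f v = v → u = v)

section
include hnc

lemma nonEF_inj {x : A} (hx : ¬ EF f x) {i j : ℕ} (h : f^[i] x = f^[j] x) : i = j := by
  have key : ∀ i j : ℕ, i < j → f^[i] x = f^[j] x → False := by
    intro i j hij he
    apply hx
    refine ⟨i, hnc _ (j - i) (by omega) ?_⟩
    rw [← Function.iterate_add_apply, show j - i + i = j by omega]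
    exact he.symm
  rcases lt_trichotomy i j with hc | hc | hc
  · exact (key i j hc h).elim
  · exact hc
  · exact (key j i hc h.symm).elim

end

section
include huf

lemma ef_mg {x y : A} (hx : EF f x) (hy : EF f y) : Mg f x y := by
  obtain ⟨n, hn⟩ := hx
  obtain ⟨m, hm⟩ := hy
  have h1 : f^[max n m] x = f^[n] x := ef_stable hn (le_max_left n m)
  have h2 : f^[max n m] y = f^[m] y := ef_stable hm (le_max_right n m)
  have h3 : f^[n] x = f^[m] y := huf _ _ hn hm
  exact ⟨max n m, by rw [h1, h2, h3]⟩

end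

lemma rep_wit (x : A) : ∃ pq : ℕ × ℕ, f^[pq.1] (rep f x) = f^[pq.2] x := by
  obtain ⟨p, q, h⟩ := rep_mem (f := f) x
  exact ⟨(q, p), h.symm⟩

/-- signed position in the orbit, relative to the representative. -/
noncomputable def delta (f : A → A) [WellFoundedLT A] (x : A) : ℤ :=
  ((Classical.choose (rep_wit (f := f) x)).1 : ℤ) - (Classical.choose (rep_wit (f := f) x)).2

section
include hnc

lemma delta_aux {x : A} (hx : ¬ EF f x) {p q p' q' : ℕ}
    (h1 : f^[p] (rep f x) = f^[q] x) (h2 : f^[p'] (rep f x) = f^[q'] x) :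
    (p : ℤ) - q = (p' : ℤ) - q' := by
  have hrho : ¬ EF f (rep f x) := orb_nonEF hx (rep_mem x)
  have e1 : f^[q' + p] (rep f x) = f^[q' + q] x := by
    rw [Function.iterate_add_apply, h1, ← Function.iterate_add_apply]
  have e2 : f^[q + p'] (rep f x) = f^[q + q'] x := by
    rw [Function.iterate_add_apply, h2, ← Function.iterate_add_apply]
  have e3 : f^[q' + p] (rep f x) = f^[q + p'] (rep f x) := by
    rw [e1, e2, Nat.add_comm q q']
  have := nonEF_inj hnc hrho e3
  omega

lemma delta_eq {x : A} (hx : ¬ EF f x) {p q : ℕ} (h : f^[p] (rep f x) = f^[q] x) :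
    delta f x = (p : ℤ) - q := by
  have hs := Classical.choose_spec (rep_wit (f := f) x)
  exact delta_aux hnc hx hs h

lemma delta_f {x : A} (hx : ¬ EF f x) : delta f (f x) = delta f x + 1 := by
  have hfx : ¬ EF f (f x) := fun h => hx ((ef_f_iff x).mp h)
  obtain ⟨⟨p, q⟩, h⟩ := rep_wit (f := f) x
  have hrr : rep f (f x) = rep f x := rep_f x
  have hx_val : delta f x = (p : ℤ) - q := delta_eq hnc hx h
  rcases Nat.eq_zero_or_pos q with hq | hq
  · subst hq
    have h' : f^[p + 1] (rep f (f x)) = f^[0] (f x) := by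
      rw [hrr, Function.iterate_succ_apply', h]
      simp
    have hval := delta_eq hnc hfx h'
    rw [hval, hx_val]
    push_cast
    omega
  · obtain ⟨k, rfl⟩ : ∃ k, q = k + 1 := ⟨q - 1, by omega⟩
    have h' : f^[p] (rep f (f x)) = f^[k] (f x) := by
      rw [hrr, h, Function.iterate_succ_apply]
    have hval := delta_eq hnc hfx h'
    rw [hval, hx_val]
    push_cast
    omega

lemma delta_mg {x y : A} (hx : ¬ EF f x) (hy : ¬ EF f y)
    (hr : rep f x = rep f y) (hd : delta f x = delta f y) : Mg f x y := by
  obtain ⟨⟨p, q⟩, h1⟩ := rep_wit (f := f) x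
  obtain ⟨⟨p', q'⟩, h2⟩ := rep_wit (f := f) y
  have d1 : delta f x = (p : ℤ) - q := delta_eq hnc hx h1
  have d2 : delta f y = (p' : ℤ) - q' := delta_eq hnc hy h2
  have e1 : f^[q' + p] (rep f x) = f^[q' + q] x := by
    rw [Function.iterate_add_apply, h1, ← Function.iterate_add_apply]
  have e2 : f^[q + p'] (rep f x) = f^[q + q'] y := by
    rw [hr, Function.iterate_add_apply, h2, ← Function.iterate_add_apply]
  have hqq : q' + p = q + p' := by omega
  refine ⟨q' + q, ?_⟩
  rw [← e1, hqq, e2, Nat.add_comm q q']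

end

open Classical in
/-- the sign: 1 for eventually fixed, 0/2 by parity of `delta`. -/
noncomputable def sgn (f : A → A) [WellFoundedLT A] (x : A) : ℕ :=
  if EF f x then 1 else if Even (delta f x) then 0 else 2

lemma sgn_le_two (x : A) : sgn f x ≤ 2 := by
  simp only [sgn]; split_ifs <;> omega

lemma sgn_eq_one {x : A} (h : sgn f x = 1) : EF f x := by
  by_contra hc
  simp only [sgn] at h
  rw [if_neg hc] at h
  split_ifs at h <;> omega

lemma sgn_eq_zero {x : A} (h : sgn f x = 0) : ¬ EF f x ∧ Even (delta f x) := by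
  by_cases hc : EF f x
  · simp only [sgn] at h; rw [if_pos hc] at h; omega
  by_cases he : Even (delta f x)
  · exact ⟨hc, he⟩
  · simp only [sgn] at h; rw [if_neg hc, if_neg he] at h; omega

lemma sgn_eq_two {x : A} (h : sgn f x = 2) : ¬ EF f x ∧ ¬ Even (delta f x) := by
  by_cases hc : EF f x
  · simp only [sgn] at h; rw [if_pos hc] at h; omega
  by_cases he : Even (delta f x)
  · simp only [sgn] at h; rw [if_neg hc, if_pos he] at h; omega
  · exact ⟨hc, he⟩

lemma sgn_of_EF {x : A} (h : EF f x) : sgn f x = 1 := by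
  simp only [sgn]; rw [if_pos h]

lemma sgn_of_even {x : A} (h : ¬ EF f x) (he : Even (delta f x)) : sgn f x = 0 := by
  simp only [sgn]; rw [if_neg h, if_pos he]

lemma sgn_of_odd {x : A} (h : ¬ EF f x) (he : ¬ Even (delta f x)) : sgn f x = 2 := by
  simp only [sgn]; rw [if_neg h, if_neg he]

section
include hnc

lemma sgn_f (x : A) : sgn f (f x) = 2 - sgn f x := by
  by_cases h : EF f x
  · rw [sgn_of_EF h, sgn_of_EF ((ef_f_iff x).mpr h)]
  · have hfx : ¬ EF f (f x) := fun hc => h ((ef_f_iff x).mp hc)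
    have hd := delta_f hnc h
    by_cases he : Even (delta f x)
    · rw [sgn_of_even h he, sgn_of_odd hfx (by rw [hd]; simp [Int.even_add_one, he])]
    · rw [sgn_of_odd h he, sgn_of_even hfx (by rw [hd]; simp [Int.even_add_one, he, ← Int.not_even_iff_odd])]

end

/-- the strict linear order for the no-cycle case -/
def lt3 (f : A → A) [WellFoundedLT A] (x y : A) : Prop :=
  sgn f x < sgn f y ∨
  (sgn f x = sgn f y ∧ sgn f x = 1 ∧ Wlt f x y) ∨
  (sgn f x = sgn f y ∧ sgn f x = 0 ∧
    (rep f x < rep f y ∨ (rep f x = rep f y ∧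
      (delta f x < delta f y ∨ (delta f x = delta f y ∧ Wlt f x y))))) ∨
  (sgn f x = sgn f y ∧ sgn f x = 2 ∧
    (rep f y < rep f x ∨ (rep f x = rep f y ∧
      (delta f y < delta f x ∨ (delta f x = delta f y ∧ Wlt f x y)))))

lemma lt3_irrefl (x : A) : ¬ lt3 f x x := by
  rintro (h | ⟨-, -, h⟩ | ⟨-, -, (h | ⟨-, (h | ⟨-, h⟩)⟩)⟩ | ⟨-, -, (h | ⟨-, (h | ⟨-, h⟩)⟩)⟩)
  · omega
  · exact wlt_irrefl x h
  · exact lt_irrefl _ h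
  · exact lt_irrefl _ h
  · exact wlt_irrefl x h
  · exact lt_irrefl _ h
  · exact lt_irrefl _ h
  · exact wlt_irrefl x h

lemma lt3_trans {x y z : A} (h1 : lt3 f x y) (h2 : lt3 f y z) : lt3 f x z := by
  have hs1 : sgn f x ≤ sgn f y := by
    rcases h1 with h | ⟨h, -⟩ | ⟨h, -⟩ | ⟨h, -⟩ <;> omega
  have hs2 : sgn f y ≤ sgn f z := by
    rcases h2 with h | ⟨h, -⟩ | ⟨h, -⟩ | ⟨h, -⟩ <;> omega
  rcases Nat.lt_or_ge (sgn f x) (sgn f z) with hlt | hge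
  · exact Or.inl hlt
  have hexy : sgn f x = sgn f y := by omega
  have heyz : sgn f y = sgn f z := by omega
  rcases h1 with h | ⟨-, hv, h⟩ | ⟨-, hv, h⟩ | ⟨-, hv, h⟩
  · omega
  · rcases h2 with h' | ⟨-, -, h'⟩ | ⟨-, hv', -⟩ | ⟨-, hv', -⟩
    · omega
    · exact Or.inr (Or.inl ⟨hexy.trans heyz, hv, wlt_trans h h'⟩)
    · omega
    · omega
  · rcases h2 with h' | ⟨-, hv', -⟩ | ⟨-, -, h'⟩ | ⟨-, hv', -⟩
    · omega
    · omega
    · refine Or.inr (Or.inr (Or.inl ⟨hexy.trans heyz, hv, ?_⟩))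
      rcases h with hr | ⟨hre, hd⟩
      · rcases h' with hr' | ⟨hre', -⟩
        · exact Or.inl (hr.trans hr')
        · exact Or.inl (hre' ▸ hr)
      · rcases h' with hr' | ⟨hre', hd'⟩
        · exact Or.inl (hre ▸ hr')
        · refine Or.inr ⟨hre.trans hre', ?_⟩
          rcases hd with hd | ⟨hde, hw⟩
          · rcases hd' with hd' | ⟨hde', -⟩
            · exact Or.inl (hd.trans hd')
            · exact Or.inl (hde' ▸ hd)
          · rcases hd' with hd' | ⟨hde', hw'⟩
            · exact Or.inl (hde ▸ hd')
            · exact Or.inr ⟨hde.trans hde', wlt_trans hw hw'⟩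
    · omega
  · rcases h2 with h' | ⟨-, hv', -⟩ | ⟨-, hv', -⟩ | ⟨-, -, h'⟩
    · omega
    · omega
    · omega
    · refine Or.inr (Or.inr (Or.inr ⟨hexy.trans heyz, hv, ?_⟩))
      rcases h with hr | ⟨hre, hd⟩
      · rcases h' with hr' | ⟨hre', -⟩
        · exact Or.inl (hr'.trans hr)
        · exact Or.inl (hre'.symm ▸ hr)
      · rcases h' with hr' | ⟨hre', hd'⟩
        · exact Or.inl (hre.symm ▸ hr')
        · refine Or.inr ⟨hre.trans hre', ?_⟩
          rcases hd with hd | ⟨hde, hw⟩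
          · rcases hd' with hd' | ⟨hde', -⟩
            · exact Or.inl (hd'.trans hd)
            · exact Or.inl (hde'.symm ▸ hd)
          · rcases hd' with hd' | ⟨hde', hw'⟩
            · exact Or.inl (hde.symm ▸ hd')
            · exact Or.inr ⟨hde.trans hde', wlt_trans hw hw'⟩

section
include hnc huf

lemma lt3_trichot {x y : A} (hne : x ≠ y) : lt3 f x y ∨ lt3 f y x := by
  rcases lt_trichotomy (sgn f x) (sgn f y) with hs | hs | hs
  · exact Or.inl (Or.inl hs)
  · rcases Nat.lt_or_ge (sgn f x) 1 with h0 | h1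
    · have hx0 : sgn f x = 0 := by omega
      have hy0 : sgn f y = 0 := by omega
      obtain ⟨hxEF, hxe⟩ := sgn_eq_zero hx0
      obtain ⟨hyEF, hye⟩ := sgn_eq_zero hy0
      rcases lt_trichotomy (rep f x) (rep f y) with hr | hr | hr
      · exact Or.inl (Or.inr (Or.inr (Or.inl ⟨hs, hx0, Or.inl hr⟩)))
      · rcases lt_trichotomy (delta f x) (delta f y) with hd | hd | hd
        · exact Or.inl (Or.inr (Or.inr (Or.inl ⟨hs, hx0, Or.inr ⟨hr, Or.inl hd⟩⟩)))
        · have hmg : Mg f x y := delta_mg hnc hxEF hyEF hr hd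
          rcases wlt_trichotomy hmg hne with hw | hw
          · exact Or.inl (Or.inr (Or.inr (Or.inl ⟨hs, hx0, Or.inr ⟨hr, Or.inr ⟨hd, hw⟩⟩⟩)))
          · exact Or.inr (Or.inr (Or.inr (Or.inl ⟨hs.symm, hy0,
              Or.inr ⟨hr.symm, Or.inr ⟨hd.symm, hw⟩⟩⟩)))
        · exact Or.inr (Or.inr (Or.inr (Or.inl ⟨hs.symm, hy0, Or.inr ⟨hr.symm, Or.inl hd⟩⟩)))
      · exact Or.inr (Or.inr (Or.inr (Or.inl ⟨hs.symm, hy0, Or.inl hr⟩)))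
    rcases Nat.lt_or_ge (sgn f x) 2 with h2 | h2
    · have hx1 : sgn f x = 1 := by omega
      have hy1 : sgn f y = 1 := by omega
      have hmg : Mg f x y := ef_mg huf (sgn_eq_one hx1) (sgn_eq_one hy1)
      rcases wlt_trichotomy hmg hne with hw | hw
      · exact Or.inl (Or.inr (Or.inl ⟨hs, hx1, hw⟩))
      · exact Or.inr (Or.inr (Or.inl ⟨hs.symm, hy1, hw⟩))
    · have hx2 : sgn f x = 2 := by have := sgn_le_two (f := f) x; omega
      have hy2 : sgn f y = 2 := by omega
      obtain ⟨hxEF, hxe⟩ := sgn_eq_two hx2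
      obtain ⟨hyEF, hye⟩ := sgn_eq_two hy2
      rcases lt_trichotomy (rep f x) (rep f y) with hr | hr | hr
      · exact Or.inr (Or.inr (Or.inr (Or.inr ⟨hs.symm, hy2, Or.inl hr⟩)))
      · rcases lt_trichotomy (delta f x) (delta f y) with hd | hd | hd
        · exact Or.inr (Or.inr (Or.inr (Or.inr ⟨hs.symm, hy2, Or.inr ⟨hr.symm, Or.inl hd⟩⟩)))
        · have hmg : Mg f x y := delta_mg hnc hxEF hyEF hr hd
          rcases wlt_trichotomy hmg hne with hw | hw
          · exact Or.inl (Or.inr (Or.inr (Or.inr ⟨hs, hx2, Or.inr ⟨hr, Or.inr ⟨hd, hw⟩⟩⟩)))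
          · exact Or.inr (Or.inr (Or.inr (Or.inr ⟨hs.symm, hy2,
              Or.inr ⟨hr.symm, Or.inr ⟨hd.symm, hw⟩⟩⟩)))
        · exact Or.inl (Or.inr (Or.inr (Or.inr ⟨hs, hx2, Or.inr ⟨hr, Or.inl hd⟩⟩)))
      · exact Or.inl (Or.inr (Or.inr (Or.inr ⟨hs, hx2, Or.inl hr⟩)))
  · exact Or.inr (Or.inl hs)

end

section
include hnc

lemma lt3_antitone {x y : A} (h : lt3 f x y) : f x = f y ∨ lt3 f (f y) (f x) := by
  have hfx := sgn_f hnc x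
  have hfy := sgn_f hnc y
  have hx2 := sgn_le_two (f := f) x
  have hy2 := sgn_le_two (f := f) y
  rcases h with hs | ⟨hse, hv, hw⟩ | ⟨hse, hv, h0⟩ | ⟨hse, hv, h2⟩
  · refine Or.inr (Or.inl ?_)
    omega
  · rcases wlt_flip hw with he | hw'
    · exact Or.inl he
    · exact Or.inr (Or.inr (Or.inl ⟨by omega, by omega, hw'⟩))
  · have hxEF : ¬ EF f x := (sgn_eq_zero hv).1
    have hyEF : ¬ EF f y := (sgn_eq_zero (hse ▸ hv)).1
    have hdx := delta_f hnc hxEF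
    have hdy := delta_f hnc hyEF
    have hrx := rep_f (f := f) x
    have hry := rep_f (f := f) y
    rcases h0 with hr | ⟨hre, (hd | ⟨hde, hw⟩)⟩
    · refine Or.inr (Or.inr (Or.inr (Or.inr ⟨by omega, by omega, Or.inl ?_⟩)))
      rw [hrx, hry]; exact hr
    · refine Or.inr (Or.inr (Or.inr (Or.inr ⟨by omega, by omega,
        Or.inr ⟨by rw [hrx, hry]; exact hre.symm, Or.inl (by omega)⟩⟩)))
    · rcases wlt_flip hw with he | hw'
      · exact Or.inl he
      · exact Or.inr (Or.inr (Or.inr (Or.inr ⟨by omega, by omega,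
          Or.inr ⟨by rw [hrx, hry]; exact hre.symm, Or.inr ⟨by omega, hw'⟩⟩⟩)))
  · have hxEF : ¬ EF f x := (sgn_eq_two hv).1
    have hyEF : ¬ EF f y := (sgn_eq_two (hse ▸ hv)).1
    have hdx := delta_f hnc hxEF
    have hdy := delta_f hnc hyEF
    have hrx := rep_f (f := f) x
    have hry := rep_f (f := f) y
    rcases h2 with hr | ⟨hre, (hd | ⟨hde, hw⟩)⟩
    · refine Or.inr (Or.inr (Or.inr (Or.inl ⟨by omega, by omega, Or.inl ?_⟩)))
      rw [hrx, hry]; exact hr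
    · refine Or.inr (Or.inr (Or.inr (Or.inl ⟨by omega, by omega,
        Or.inr ⟨by rw [hrx, hry]; exact hre.symm, Or.inl (by omega)⟩⟩)))
    · rcases wlt_flip hw with he | hw'
      · exact Or.inl he
      · exact Or.inr (Or.inr (Or.inr (Or.inl ⟨by omega, by omega,
          Or.inr ⟨by rw [hrx, hry]; exact hre.symm, Or.inr ⟨by omega, hw'⟩⟩⟩)))

end

end NoCycle


section NoCycle2

variable {A : Type*} [LinearOrder A] [hwf : WellFoundedLT A] {f : A → A}
variable (hnc : ∀ w : A, ∀ p : ℕ, 1 ≤ p → f^[p] w = w → f w = w)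
  (huf : ∀ u v : A, f u = u → f v = v → u = v)

/-- reflexive closure of lt3 -/
def le3 (f : A → A) [WellFoundedLT A] (x y : A) : Prop := x = y ∨ lt3 f x y

lemma le3_refl (x : A) : le3 f x x := Or.inl rfl

lemma le3_trans {x y z : A} (h1 : le3 f x y) (h2 : le3 f y z) : le3 f x z := by
  rcases h1 with rfl | h1
  · exact h2
  rcases h2 with rfl | h2
  · exact Or.inr h1
  exact Or.inr (lt3_trans h1 h2)

lemma le3_antisymm {x y : A} (h1 : le3 f x y) (h2 : le3 f y x) : x = y := by
  rcases h1 with rfl | h1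
  · rfl
  rcases h2 with rfl | h2
  · rfl
  exact absurd (lt3_trans h1 h2) (lt3_irrefl x)

section
include hnc huf

lemma le3_total (x y : A) : le3 f x y ∨ le3 f y x := by
  by_cases he : x = y
  · exact Or.inl (Or.inl he)
  · rcases lt3_trichot hnc huf he with h | h
    · exact Or.inl (Or.inr h)
    · exact Or.inr (Or.inr h)

end

section
include hnc

lemma le3_antitone {x y : A} (h : le3 f x y) : le3 f (f y) (f x) := by
  rcases h with rfl | h
  · exact le3_refl _
  · rcases lt3_antitone hnc h with he | hl
    · exact Or.inl he.symm
    · exact Or.inr hl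

end

open Classical in
noncomputable def sup3 (f : A → A) [WellFoundedLT A] (x y : A) : A :=
  if le3 f x y then y else x

open Classical in
noncomputable def inf3 (f : A → A) [WellFoundedLT A] (x y : A) : A :=
  if le3 f x y then x else y

section
include hnc huf

open Classical in
/-- the lattice (a linear order) for the no-cycle case -/
noncomputable def noCycleLattice : Lattice A where
  le := le3 f
  lt x y := le3 f x y ∧ ¬ le3 f y x
  lt_iff_le_not_ge := fun _ _ => Iff.rfl
  le_refl := le3_refl
  le_trans := fun _ _ _ => le3_trans
  le_antisymm := fun _ _ => le3_antisymm
  sup := sup3 f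
  inf := inf3 f
  le_sup_left x y := by
    simp only [sup3]
    by_cases h : le3 f x y
    · rw [if_pos h]; exact h
    · rw [if_neg h]; exact le3_refl x
  le_sup_right x y := by
    simp only [sup3]
    by_cases h : le3 f x y
    · rw [if_pos h]; exact le3_refl y
    · rw [if_neg h]; exact (le3_total hnc huf y x).resolve_right h
  sup_le x y u hxu' hyu' := by
    have hxu : le3 f x u := hxu'
    have hyu : le3 f y u := hyu'
    simp only [sup3]
    by_cases h : le3 f x y
    · rw [if_pos h]; exact hyu
    · rw [if_neg h]; exact hxu
  inf_le_left x y := by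
    simp only [inf3]
    by_cases h : le3 f x y
    · rw [if_pos h]; exact le3_refl x
    · rw [if_neg h]; exact (le3_total hnc huf y x).resolve_right h
  inf_le_right x y := by
    simp only [inf3]
    by_cases h : le3 f x y
    · rw [if_pos h]; exact h
    · rw [if_neg h]; exact le3_refl y
  le_inf u x y hux' huy' := by
    have hux : le3 f u x := hux'
    have huy : le3 f u y := huy'
    simp only [inf3]
    by_cases h : le3 f x y
    · rw [if_pos h]; exact hux
    · rw [if_neg h]; exact huy

lemma anti_main3 (x y : A) :
    f (sup3 f x y) = inf3 f (f x) (f y) ∧ f (inf3 f x y) = sup3 f (f x) (f y) := by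
  by_cases h1 : le3 f x y
  · have hf : le3 f (f y) (f x) := le3_antitone hnc h1
    constructor
    · simp only [sup3, inf3]
      rw [if_pos h1]
      by_cases h3 : le3 f (f x) (f y)
      · rw [if_pos h3]; exact (le3_antisymm h3 hf).symm
      · rw [if_neg h3]
    · simp only [sup3, inf3]
      rw [if_pos h1]
      by_cases h3 : le3 f (f x) (f y)
      · rw [if_pos h3]; exact le3_antisymm h3 hf
      · rw [if_neg h3]
  · have h2 : le3 f y x := (le3_total hnc huf x y).resolve_left h1
    have hf : le3 f (f x) (f y) := le3_antitone hnc h2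
    constructor
    · simp only [sup3, inf3]
      rw [if_neg h1, if_pos hf]
    · simp only [sup3, inf3]
      rw [if_neg h1, if_pos hf]

end

end NoCycle2


section Cycles

variable {A : Type*} {f : A → A}

lemma make2cycle {s m : A} (hne : s ≠ m) (h1 : f s = m) (h2 : f m = s) :
    HasCycle f 2 := by
  refine ⟨fun i => if i = 0 then s else m, ?_, ?_⟩
  · intro i j hij
    fin_cases i <;> fin_cases j <;> simp_all
  · intro i
    fin_cases i
    · simpa using h1
    · simpa using h2

lemma of2cycle (h : HasCycle f 2) : ∃ a b : A, a ≠ b ∧ f a = b ∧ f b = a := by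
  obtain ⟨x, hinj, hmap⟩ := h
  refine ⟨x 0, x 1, fun hc => absurd (hinj hc) (by decide), ?_, ?_⟩
  · simpa using hmap 0
  · simpa using hmap 1

lemma periodic_fixed (Hn : ∀ n : ℕ, 2 ≤ n → ¬ HasCycle f n) :
    ∀ w : A, ∀ p : ℕ, 1 ≤ p → f^[p] w = w → f w = w := by
  classical
  intro w p hp hw
  by_contra hfw
  have hex : ∃ n, 1 ≤ n ∧ f^[n] w = w := ⟨p, hp, hw⟩
  obtain ⟨hp1, hpw⟩ := Nat.find_spec hex
  set p' := Nat.find hex with hp'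
  have hmin : ∀ k, k < p' → ¬ (1 ≤ k ∧ f^[k] w = w) := fun k hk => Nat.find_min hex hk
  have hp2 : 2 ≤ p' := by
    rcases Nat.lt_or_ge p' 2 with h | h
    · have he1 : p' = 1 := by omega
      rw [he1] at hpw
      exact absurd (by simpa using hpw) hfw
    · exact h
  apply Hn p' hp2
  have key : ∀ a b : ℕ, a < b → b < p' → f^[a] w ≠ f^[b] w := by
    intro a b hab hbp habe
    have h1 : f^[p' - b] (f^[b] w) = w := by
      rw [← Function.iterate_add_apply, show p' - b + b = p' by omega]
      exact hpw
    have h2 : f^[p' - b + a] w = w := by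
      rw [Function.iterate_add_apply, habe, h1]
    exact hmin (p' - b + a) (by omega) ⟨by omega, h2⟩
  refine ⟨fun i => f^[(i : ℕ)] w, ?_, ?_⟩
  · intro i j hij
    by_contra hne
    have hne' : (i : ℕ) ≠ (j : ℕ) := fun hc => hne (Fin.ext hc)
    rcases lt_or_gt_of_ne hne' with hc | hc
    · exact key _ _ hc j.isLt hij
    · exact key _ _ hc i.isLt hij.symm
  · intro i
    show f (f^[(i : ℕ)] w) = f^[((i : ℕ) + 1) % p'] w
    by_cases hi : (i : ℕ) + 1 < p'
    · rw [Nat.mod_eq_of_lt hi, Function.iterate_succ_apply']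
    · have hieq : (i : ℕ) + 1 = p' := by have := i.isLt; omega
      rw [hieq, Nat.mod_self]
      have hstep : f (f^[(i : ℕ)] w) = f^[(i : ℕ) + 1] w :=
        (Function.iterate_succ_apply' f _ w).symm
      rw [hstep, hieq, hpw]
      rfl

end Cycles

section Forward

variable {A : Type*} [Lattice A] {f : A → A}

lemma map_sup' (hf : ∀ x y : A, f (x ⊔ y) = f x ⊓ f y) {ι : Type*}
    {t : Finset ι} (ht : t.Nonempty) (x : ι → A) :
    f (t.sup' ht x) = t.inf' ht (fun i => f (x i)) := by
  induction ht using Finset.Nonempty.cons_induction with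
  | singleton i => simp
  | cons i s his hs ih =>
    rw [Finset.sup'_cons hs, Finset.inf'_cons hs, hf, ih]

lemma map_inf' (hf : ∀ x y : A, f (x ⊓ y) = f x ⊔ f y) {ι : Type*}
    {t : Finset ι} (ht : t.Nonempty) (x : ι → A) :
    f (t.inf' ht x) = t.sup' ht (fun i => f (x i)) := by
  induction ht using Finset.Nonempty.cons_induction with
  | singleton i => simp
  | cons i s his hs ih =>
    rw [Finset.sup'_cons hs, Finset.inf'_cons hs, hf, ih]

lemma no_big_cycles (hf : IsLatAntiEndo f) (h2 : ¬ HasCycle f 2) {n : ℕ}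
    (hn : 2 ≤ n) : ¬ HasCycle f n := by
  rintro ⟨x, hinj, hmap⟩
  obtain ⟨m, rfl⟩ : ∃ m, n = m + 2 := ⟨n - 2, by omega⟩
  have hne : (Finset.univ : Finset (Fin (m + 2))).Nonempty := ⟨0, Finset.mem_univ 0⟩
  have hrot : ∀ i : Fin (m + 2), f (x i) = x (finRotate (m + 2) i) := by
    intro i
    rw [finRotate_succ_apply]
    have he : (⟨((i : ℕ) + 1) % (m + 2), Nat.mod_lt _ i.pos⟩ : Fin (m + 2)) = i + 1 := by
      apply Fin.ext
      simp [Fin.val_add, Fin.val_one]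
    rw [← he]
    exact hmap i
  have hreindex_inf : (Finset.univ.inf' hne fun i => f (x i)) = Finset.univ.inf' hne x := by
    have h1 : (Finset.univ.inf' hne fun i => f (x i)) =
        Finset.univ.inf' hne (x ∘ (finRotate (m + 2)).toEmbedding) := by
      apply Finset.inf'_congr hne rfl
      intro i _
      exact hrot i
    have h2' := Finset.inf'_comp_eq_map (s := (Finset.univ : Finset (Fin (m + 2))))
      (f := (finRotate (m + 2)).toEmbedding) x hne
    rw [h1, h2']
    simp only [Finset.map_univ_equiv]
  have hreindex_sup : (Finset.univ.sup' hne fun i => f (x i)) = Finset.univ.sup' hne x := by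
    have h1 : (Finset.univ.sup' hne fun i => f (x i)) =
        Finset.univ.sup' hne (x ∘ (finRotate (m + 2)).toEmbedding) := by
      apply Finset.sup'_congr hne rfl
      intro i _
      exact hrot i
    have h2' := Finset.sup'_comp_eq_map (s := (Finset.univ : Finset (Fin (m + 2))))
      (f := (finRotate (m + 2)).toEmbedding) x hne
    rw [h1, h2']
    simp only [Finset.map_univ_equiv]
  set S := Finset.univ.sup' hne x with hS
  set I := Finset.univ.inf' hne x with hI
  have hfS : f S = I := by
    rw [hS, map_sup' (fun u v => (hf u v).1) hne x, hreindex_inf]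
  have hfI : f I = S := by
    rw [hI, map_inf' (fun u v => (hf u v).2) hne x, hreindex_sup]
  have hSI : S ≠ I := by
    intro he
    have h01 : x 0 = x 1 := by
      have hx0S : x 0 ≤ S := Finset.le_sup' x (Finset.mem_univ 0)
      have hx1S : x 1 ≤ S := Finset.le_sup' x (Finset.mem_univ 1)
      have hIx0 : I ≤ x 0 := Finset.inf'_le x (Finset.mem_univ 0)
      have hIx1 : I ≤ x 1 := Finset.inf'_le x (Finset.mem_univ 1)
      exact le_antisymm (le_trans hx0S (he ▸ hIx1)) (le_trans hx1S (he ▸ hIx0))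
    exact absurd (hinj h01) (by simp)
  exact h2 (make2cycle hSI hfS hfI)

lemma fixed_unique (hf : IsLatAntiEndo f) (h2 : ¬ HasCycle f 2) (u v : A)
    (hu : f u = u) (hv : f v = v) : u = v := by
  have ha : f (u ⊔ v) = u ⊓ v := by rw [(hf u v).1, hu, hv]
  have hb : f (u ⊓ v) = u ⊔ v := by rw [(hf u v).2, hu, hv]
  by_cases he : u ⊔ v = u ⊓ v
  · have h1 : u ≤ v := le_trans le_sup_left (he ▸ inf_le_right)
    have h2' : v ≤ u := le_trans le_sup_right (he ▸ inf_le_left)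
    exact le_antisymm h1 h2'
  · exact absurd (make2cycle he ha hb) h2

end Forward

end LatAE

/-- There is a lattice structure on `A` making `f` a lattice
anti-endomorphism iff `f` has a cycle of length 2, or `f` has no proper cycles
and at most one fixed point. -/
theorem lattice_antiEndo_iff {A : Type*} (f : A → A) :
    (∃ inst : Lattice A, @IsLatAntiEndo A inst f) ↔
      (HasCycle f 2 ∨
        ((∀ n : ℕ, 2 ≤ n → ¬ HasCycle f n) ∧
          ∀ u v : A, f u = u → f v = v → u = v)) := by
  constructor
  · rintro ⟨inst, hf⟩
    by_cases h2 : HasCycle f 2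
    · exact Or.inl h2
    · exact Or.inr ⟨fun n hn => LatAE.no_big_cycles hf h2 hn,
        fun u v hu hv => LatAE.fixed_unique hf h2 u v hu hv⟩
  · rintro (h2 | ⟨Hn, Hf⟩)
    · obtain ⟨a, b, hab, hfa, hfb⟩ := LatAE.of2cycle h2
      obtain ⟨lo, hwo⟩ := exists_wellOrder A
      classical
      letI := lo
      set rk : A → ℕ := fun x => if x = b then 0 else if x = a then 2 else 1 with hrk
      set r : A → A → Prop := fun u v => rk u < rk v ∨ (rk u = rk v ∧ u < v) with hr
      haveI htri : IsTrichotomous A r := by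
        constructor
        intro u v
        suffices h : r u v ∨ u = v ∨ r v u from fun h1 h2 => (h.resolve_left h1).resolve_right h2
        rcases lt_trichotomy (rk u) (rk v) with h | h | h
        · exact Or.inl (Or.inl h)
        · rcases lt_trichotomy u v with h' | h' | h'
          · exact Or.inl (Or.inr ⟨h, h'⟩)
          · exact Or.inr (Or.inl h')
          · exact Or.inr (Or.inr (Or.inr ⟨h.symm, h'⟩))
        · exact Or.inr (Or.inr (Or.inl h))
      haveI hirr : IsIrrefl A r := by
        constructor
        rintro u (h | ⟨-, h⟩)
        · omega
        · exact lt_irrefl u h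
      haveI htrans : IsTrans A r := by
        constructor
        rintro u v w (h1 | ⟨h1, h1'⟩) (h2 | ⟨h2, h2'⟩)
        · exact Or.inl (by omega)
        · exact Or.inl (by omega)
        · exact Or.inl (by omega)
        · exact Or.inr ⟨h1.trans h2, h1'.trans h2'⟩
      haveI hso : IsStrictOrder A r := {}
      haveI hsto : IsStrictTotalOrder A r := {}
      letI lo2 : LinearOrder A := @linearOrderOfSTO A r hsto (Classical.decRel r)
      have hbmin : ∀ x : A, x ≠ b → @LT.lt A lo2.toLT b x := by
        intro x hx
        show r b x
        refine Or.inl ?_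
        show rk b < rk x
        have e1 : rk b = 0 := by simp [hrk]
        rcases eq_or_ne x a with rfl | hxa
        · have e2 : rk x = 2 := by simp [hrk, hab]
          rw [e1, e2]
          norm_num
        · have e2 : rk x = 1 := by simp [hrk, hx, hxa]
          rw [e1, e2]
          norm_num
      have hamax : ∀ x : A, x ≠ a → @LT.lt A lo2.toLT x a := by
        intro x hx
        show r x a
        refine Or.inl ?_
        show rk x < rk a
        have e2 : rk a = 2 := by simp [hrk, hab]
        rcases eq_or_ne x b with rfl | hxb
        · have e1 : rk x = 0 := by simp [hrk]
          rw [e1, e2]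
          norm_num
        · have e1 : rk x = 1 := by simp [hrk, hxb, hx]
          rw [e1, e2]
          norm_num
      refine ⟨@LatAE.twoCycleLattice A lo2 f a b hab hfa hfb hbmin hamax, ?_⟩
      intro x y
      exact @LatAE.anti_main A lo2 f a b hab hfa hfb x y
    · obtain ⟨lo, hwo⟩ := exists_wellOrder A
      letI := lo
      letI := hwo
      have hnc := LatAE.periodic_fixed Hn
      refine ⟨@LatAE.noCycleLattice A lo hwo f hnc Hf, ?_⟩
      intro x y
      exact @LatAE.anti_main3 A lo hwo f hnc Hf x y
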